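/- For all points x, y in the open unit ball 𝔹ⁿ one has tanh(ρ(x,y)/4) ≥ |x−y| / ( 2 + 2|x||y| − (1/2)·(|x|+|y|)²/(1+|x||y|) ). -/
import Mathlib


/-- Hyperbolic distance in the open unit ball of `ℝⁿ`:
`ρ(x,y) = 2 · arsinh(|x−y| / (√(1−|x|²)·√(1−|y|²)))`. -/
noncomputable def hypDistBall {n : ℕ} (x y : EuclideanSpace ℝ (Fin n)) : ℝ :=
  2 * Real.arsinh (‖x - y‖ / (Real.sqrt (1 - ‖x‖ ^ 2) * Real.sqrt (1 - ‖y‖ ^ 2)))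

lemma tanh_half_arsinh (s : ℝ) :
    Real.tanh (Real.arsinh s / 2) = s / (1 + Real.sqrt (1 + s ^ 2)) := by
  set t := Real.arsinh s / 2 with ht
  have h2t : Real.arsinh s = 2 * t := by rw [ht]; ring
  have hs : s = 2 * Real.sinh t * Real.cosh t := by
    rw [← Real.sinh_arsinh s, h2t, Real.sinh_two_mul]
  have hc : Real.sqrt (1 + s ^ 2) = Real.cosh t ^ 2 + Real.sinh t ^ 2 := by
    rw [← Real.cosh_arsinh s, h2t, Real.cosh_two_mul]
  have hcosh : (0:ℝ) < Real.cosh t := Real.cosh_pos t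
  have hid : Real.cosh t ^ 2 - Real.sinh t ^ 2 = 1 := Real.cosh_sq_sub_sinh_sq t
  rw [Real.tanh_eq_sinh_div_cosh, hc, hs]
  rw [div_eq_div_iff hcosh.ne' (by nlinarith)]
  linear_combination (-Real.sinh t) * hid

theorem tanh_quarter_hypDist_lower_bound_five {n : ℕ} (x y : EuclideanSpace ℝ (Fin n))
    (hx : ‖x‖ < 1) (hy : ‖y‖ < 1) :
    Real.tanh (hypDistBall x y / 4) ≥
      ‖x - y‖ / (2 + 2 * ‖x‖ * ‖y‖ - (1 / 2) * (‖x‖ + ‖y‖) ^ 2 / (1 + ‖x‖ * ‖y‖)) := by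
  set a := ‖x‖ with ha
  set b := ‖y‖ with hb
  set d := ‖x - y‖ with hd
  have ha0 : 0 ≤ a := norm_nonneg _
  have hb0 : 0 ≤ b := norm_nonneg _
  have hd0 : 0 ≤ d := norm_nonneg _
  have hdab : d ≤ a + b := norm_sub_le _ _
  have h1a : (0:ℝ) < 1 - a ^ 2 := by nlinarith
  have h1b : (0:ℝ) < 1 - b ^ 2 := by nlinarith
  set P := Real.sqrt (1 - a ^ 2) * Real.sqrt (1 - b ^ 2) with hP
  have hPpos : 0 < P := mul_pos (Real.sqrt_pos.2 h1a) (Real.sqrt_pos.2 h1b)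
  have hPsq : P ^ 2 = (1 - a ^ 2) * (1 - b ^ 2) := by
    rw [hP, mul_pow, Real.sq_sqrt h1a.le, Real.sq_sqrt h1b.le]
  set c := 1 + a * b with hc
  have hcpos : (0:ℝ) < c := by nlinarith
  have hsab : a + b ≤ c := by nlinarith
  -- the square root term
  set R := Real.sqrt (P ^ 2 + d ^ 2) with hR
  have hRc : R ≤ c := by
    rw [hR]
    have : P ^ 2 + d ^ 2 ≤ c ^ 2 := by nlinarith
    calc Real.sqrt (P ^ 2 + d ^ 2) ≤ Real.sqrt (c ^ 2) := Real.sqrt_le_sqrt this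
      _ = c := Real.sqrt_sq hcpos.le
  have hPsq' : P ^ 2 = c ^ 2 - (a + b) ^ 2 := by rw [hPsq, hc]; ring
  set Q := c - (a + b) ^ 2 / (2 * c) with hQdef
  have hPc : P ≤ Q := by
    have h : Q ^ 2 - P ^ 2 = ((a + b) ^ 2 / (2 * c)) ^ 2 := by
      rw [hQdef, hPsq']; field_simp; ring
    have hQ : P ^ 2 ≤ Q ^ 2 := by
      have h0 : (0:ℝ) ≤ ((a + b) ^ 2 / (2 * c)) ^ 2 := sq_nonneg _
      clear_value Q
      linarith
    have hQ0 : 0 ≤ Q := by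
      rw [hQdef, sub_nonneg, div_le_iff₀ (by positivity : (0:ℝ) < 2 * c)]
      nlinarith
    calc P = Real.sqrt (P ^ 2) := (Real.sqrt_sq hPpos.le).symm
      _ ≤ Real.sqrt (Q ^ 2) := Real.sqrt_le_sqrt hQ
      _ = Q := Real.sqrt_sq hQ0
  have hRpos : 0 < R := by
    rw [hR]; positivity
  -- denominator comparison
  set D := 2 + 2 * a * b - (1 / 2) * (a + b) ^ 2 / (1 + a * b) with hD
  have hDeq : D = c + Q := by
    rw [hQdef]
    rw [hD, hc]; field_simp; ring
  have hPRD : P + R ≤ D := by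
    rw [hDeq]; linarith
  -- compute tanh
  have harg : hypDistBall x y / 4 = Real.arsinh (d / P) / 2 := by
    rw [hypDistBall]; ring
  rw [harg, tanh_half_arsinh]
  have hsqrt : Real.sqrt (1 + (d / P) ^ 2) = R / P := by
    have hmul : P ^ 2 + d ^ 2 = (1 + (d / P) ^ 2) * P ^ 2 := by
      field_simp
    rw [hR, hmul, Real.sqrt_mul (by positivity), Real.sqrt_sq hPpos.le,
      mul_div_cancel_right₀ _ hPpos.ne']
  rw [hsqrt]
  have heq : d / P / (1 + R / P) = d / (P + R) := by
    rw [div_div]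
    congr 1
    field_simp
  rw [heq, ge_iff_le]
  apply div_le_div_of_nonneg_left hd0 (by positivity)
  exact hPRD
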